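/- Let n, r, d, m, t be integers with 0 < r ≤ n. Define C = (d, 1,...,1, 0,...,0) (with r ones) and D_0 = (t, m, m, ..., m) as (n+1)-tuples. For 0 ≤ i < ω' (where ω' = ⌈mn/r⌉ is the least i such that all entries of D_i except possibly the first vanish), writing i(n-r) = qn + ρ with 0 ≤ ρ < n, one has D_i = (t - i*d, m-i+q, ..., m-i+q) + A_ρ, where A_ρ has ρ ones in positions 2 through ρ+1 and D_i is obtained from D_{i-1} - C by zeroing negative entries (after the first) and sorting entries 2 through n+1 in descending order. -/

import Mathlib

/-- One step of the recursion of Lemma II.4: subtract `C = (d,1,…,1,0,…,0)`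
(with `r` ones, applied to the `r` largest tail entries since the tail is kept
sorted descending), replace negative tail entries by `0`, and re-sort the tail
in descending order.  A tuple `D = (t, m₁, …, m_n)` is represented as a pair of
its first entry and the list of its remaining `n` entries. -/
def fatStep (d : ℤ) (r : ℕ) (p : ℤ × List ℤ) : ℤ × List ℤ :=
  (p.1 - d,
    ((p.2.take r).map (fun a => max (a - 1) 0) ++ p.2.drop r).insertionSort (· ≥ ·))

/-- The sequence `D_i` starting from `D_0 = (t, m, …, m)` (with `n` copies of `m`). -/
def fatD (d : ℤ) (r n : ℕ) (t m : ℤ) : ℕ → ℤ × List ℤ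
  | 0 => (t, List.replicate n m)
  | i + 1 => fatStep d r (fatD d r n t m i)

lemma perm_rot1 {α : Type*} (A B C : List α) : (A ++ (B ++ C)).Perm (B ++ (C ++ A)) := by
  have := List.perm_append_comm (l₁ := A) (l₂ := B ++ C)
  rwa [List.append_assoc] at this

lemma perm_rot2 {α : Type*} (A B C : List α) : (A ++ (B ++ C)).Perm (C ++ (A ++ B)) := by
  have := List.perm_append_comm (l₁ := A ++ B) (l₂ := C)
  rwa [List.append_assoc] at this

lemma sorted_two_block (k l : ℕ) (x y : ℤ) (h : y ≤ x) :
    (List.replicate k x ++ List.replicate l y).Pairwise (· ≥ ·) := by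
  simp only [List.pairwise_append, List.pairwise_replicate, List.mem_replicate]
  refine ⟨Or.inr le_rfl, Or.inr le_rfl, ?_⟩
  rintro a ⟨-, rfl⟩ b ⟨-, rfl⟩
  exact h

lemma fatStepA (d s x : ℤ) (r n k : ℕ) (hrk : r ≤ k) (hk : k ≤ n) (hx : 0 ≤ x) :
    fatStep d r (s, List.replicate k (x+1) ++ List.replicate (n-k) x) =
      (s - d, List.replicate (k-r) (x+1) ++ List.replicate (n-k+r) x) := by
  unfold fatStep
  simp only [Prod.mk.injEq, true_and]
  have h1 : (List.replicate k (x+1) ++ List.replicate (n-k) x).take r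
      = List.replicate r (x+1) := by
    rw [List.take_append]
    simp [List.take_replicate, Nat.sub_eq_zero_of_le hrk, min_eq_left hrk]
  have h2 : (List.replicate k (x+1) ++ List.replicate (n-k) x).drop r
      = List.replicate (k-r) (x+1) ++ List.replicate (n-k) x := by
    rw [List.drop_append]
    simp [List.drop_replicate, Nat.sub_eq_zero_of_le hrk]
  rw [h1, h2, List.map_replicate]
  have hfx : max (x + 1 - 1) 0 = x := by omega
  rw [hfx]
  apply List.Perm.eq_of_pairwise' (List.pairwise_insertionSort _ _)
    (sorted_two_block _ _ _ _ (by omega)) ((List.perm_insertionSort _ _).trans ?_)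
  rw [List.replicate_add]
  exact perm_rot1 _ _ _

lemma fatStepB (d s x : ℤ) (r n k : ℕ) (hrk : k < r) (hrn : r ≤ n) (hx : 1 ≤ x) :
    fatStep d r (s, List.replicate k (x+1) ++ List.replicate (n-k) x) =
      (s - d, List.replicate (n-r+k) x ++ List.replicate (r-k) (x-1)) := by
  unfold fatStep
  simp only [Prod.mk.injEq, true_and]
  have h1 : (List.replicate k (x+1) ++ List.replicate (n-k) x).take r
      = List.replicate k (x+1) ++ List.replicate (r-k) x := by
    rw [List.take_append]
    simp only [List.take_replicate, List.length_replicate]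
    congr 1 <;> congr 1 <;> omega
  have h2 : (List.replicate k (x+1) ++ List.replicate (n-k) x).drop r
      = List.replicate (n-r) x := by
    rw [List.drop_append, List.drop_replicate, List.drop_replicate,
      List.length_replicate, Nat.sub_eq_zero_of_le hrk.le, List.replicate_zero, List.nil_append]
    congr 1
    omega
  rw [h1, h2, List.map_append, List.map_replicate, List.map_replicate]
  have hfx : max (x + 1 - 1) 0 = x := by omega
  have hfx' : max (x - 1) 0 = x - 1 := by omega
  rw [hfx, hfx']
  apply List.Perm.eq_of_pairwise' (List.pairwise_insertionSort _ _)
    (sorted_two_block _ _ _ _ (by omega)) ((List.perm_insertionSort _ _).trans ?_)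
  rw [List.replicate_add]
  simpa only [List.append_assoc] using perm_rot2 (List.replicate k x)
    (List.replicate (r-k) (x-1)) (List.replicate (n-r) x)

theorem stmt_9 (n r : ℕ) (d m t : ℤ) (hr : 0 < r) (hrn : r ≤ n) (hm : 0 ≤ m)
    (i : ℕ) (hi : (i : ℤ) < ⌈((m * n : ℤ) : ℚ) / (r : ℚ)⌉)
    (q ρ : ℤ) (hqρ : (i : ℤ) * ((n : ℤ) - (r : ℤ)) = q * n + ρ)
    (hρ1 : 0 ≤ ρ) (hρ2 : ρ < n) :
    fatD d r n t m i =
      (t - i * d,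
        List.replicate ρ.toNat (m - i + q + 1) ++
          List.replicate (n - ρ.toNat) (m - i + q)) := by
  induction i generalizing q ρ with
  | zero =>
    have hn : (0 : ℤ) < n := by omega
    have h0 : q * (n : ℤ) + ρ = 0 := by push_cast at hqρ; linarith
    have hq : q = 0 := by
      rcases lt_trichotomy q 0 with h | h | h
      · nlinarith [mul_le_mul_of_nonneg_right (show q ≤ -1 by omega) hn.le]
      · exact h
      · nlinarith [mul_le_mul_of_nonneg_right (show (1:ℤ) ≤ q by omega) hn.le]
    have hρ : ρ = 0 := by rw [hq] at h0; omega
    subst hq hρ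
    simp [fatD]
  | succ i ih =>
    have hn0 : 0 < n := by omega
    push_cast at hqρ ⊢
    have hi' : (i : ℤ) < ⌈((m * n : ℤ) : ℚ) / (r : ℚ)⌉ :=
      lt_of_le_of_lt (by exact_mod_cast Nat.le_succ i) hi
    have hA : 0 ≤ m - ((i : ℤ) + 1) + q := by
      have hZ : ((i:ℤ) + 1) * r < m * n := by
        have h1 := Int.lt_ceil.mp hi
        rw [lt_div_iff₀ (show (0:ℚ) < (r:ℚ) by exact_mod_cast hr)] at h1
        push_cast at h1
        exact_mod_cast h1
      have hsum : (n:ℤ) * (m - ((i:ℤ)+1) + q) + ρ = m * n - ((i:ℤ)+1) * r := by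
        linear_combination -hqρ
      by_contra hneg
      push_neg at hneg
      nlinarith [mul_le_mul_of_nonneg_left (show m - ((i:ℤ)+1) + q ≤ -1 by omega)
        (show (0:ℤ) ≤ n by positivity)]
    show fatStep d r (fatD d r n t m i) = _
    rcases le_or_gt ((n:ℤ) - r) ρ with hcase | hcase
    · -- previous ρ was ρ - (n - r) < r
      have hihyp := ih hi' q (ρ - ((n:ℤ) - r))
        (by linear_combination hqρ) (by omega) (by omega)
      rw [hihyp, fatStepB d (t - (i:ℤ) * d) (m - (i:ℤ) + q) r n (ρ - ((n:ℤ) - r)).toNat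
        (by omega) hrn (by linarith)]
      simp only [Prod.mk.injEq]
      refine ⟨by ring, ?_⟩
      rw [show n - r + (ρ - ((n:ℤ) - r)).toNat = ρ.toNat by omega,
        show r - (ρ - ((n:ℤ) - r)).toNat = n - ρ.toNat by omega,
        show m - (i:ℤ) + q - 1 = m - ((i:ℤ) + 1) + q by ring,
        show m - (i:ℤ) + q = m - ((i:ℤ) + 1) + q + 1 by ring]
    · -- previous ρ was ρ + r ≥ r
      have hihyp := ih hi' (q - 1) (ρ + (r:ℤ))
        (by linear_combination hqρ) (by omega) (by omega)
      rw [hihyp, fatStepA d (t - (i:ℤ) * d) (m - (i:ℤ) + (q - 1)) r n (ρ + (r:ℤ)).toNat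
        (by omega) (by omega) (by linarith)]
      simp only [Prod.mk.injEq]
      refine ⟨by ring, ?_⟩
      rw [show (ρ + (r:ℤ)).toNat - r = ρ.toNat by omega,
        show n - (ρ + (r:ℤ)).toNat + r = n - ρ.toNat by omega,
        show m - (i:ℤ) + (q - 1) + 1 = m - ((i:ℤ) + 1) + q + 1 by ring,
        show m - (i:ℤ) + (q - 1) = m - ((i:ℤ) + 1) + q by ring]
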